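/- Let u, v be negative integers and H = ℍ[ℚ,u,v] the quaternion algebra over ℚ with i² = u, j² = v. Let a ∈ H and n ∈ ℚ with normSq a = n and 1 < n, and let z be an invertible element (a unit) of H. Then normSq(z − a) < 1 if and only if normSq(z⁻¹ − (n−1)⁻¹ • ā) < ((n−1)⁻¹)², where ā is the quaternion conjugate of a. -/

import Mathlib

open Quaternion

/-- The (reduced) norm `a * ā` of an element of a rational quaternion algebra,
viewed as a rational number via its real component. -/
noncomputable def qNormSq {u v : ℚ} (a : ℍ[ℚ, u, v]) : ℚ := (a * star a).re

lemma qNormSq_expand {u v : ℚ} (a : ℍ[ℚ, u, v]) :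
    qNormSq a = a.re^2 - u*a.imI^2 - v*a.imJ^2 + u*v*a.imK^2 := by
  simp [qNormSq, QuaternionAlgebra.re_mul]; ring

lemma qNormSq_pos {u v : ℚ} (hu : u < 0) (hv : v < 0) {a : ℍ[ℚ, u, v]} (h : a ≠ 0) :
    0 < qNormSq a := by
  have H1 := mul_nonneg (neg_nonneg.2 hu.le) (sq_nonneg a.imI)
  have H2 := mul_nonneg (neg_nonneg.2 hv.le) (sq_nonneg a.imJ)
  have H3 := mul_nonneg (mul_pos (neg_pos.2 hu) (neg_pos.2 hv)).le (sq_nonneg a.imK)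
  have H0 := sq_nonneg a.re
  rcases (show 0 ≤ qNormSq a by rw [qNormSq_expand]; nlinarith).lt_or_eq with h1 | h1
  · exact h1
  exfalso; apply h
  rw [qNormSq_expand] at h1
  have hre : a.re ^ 2 = 0 := by nlinarith
  have hI : -u * a.imI ^ 2 = 0 := by nlinarith
  have hJ : -v * a.imJ ^ 2 = 0 := by nlinarith
  have hK : -u * -v * a.imK ^ 2 = 0 := by nlinarith
  have hre' : a.re = 0 := by
    simpa using sq_eq_zero_iff.mp hre
  have hI' : a.imI = 0 := by
    rcases mul_eq_zero.mp hI with h' | h'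
    · exact absurd h' (by linarith)
    · simpa using sq_eq_zero_iff.mp h'
  have hJ' : a.imJ = 0 := by
    rcases mul_eq_zero.mp hJ with h' | h'
    · exact absurd h' (by linarith)
    · simpa using sq_eq_zero_iff.mp h'
  have hK' : a.imK = 0 := by
    rcases mul_eq_zero.mp hK with h' | h'
    · exact absurd h' (mul_pos (neg_pos.2 hu) (neg_pos.2 hv)).ne'
    · simpa using sq_eq_zero_iff.mp h'
  ext <;> simp [hre', hI', hJ', hK']

lemma mul_star_eq_coe {u v : ℚ} (a : ℍ[ℚ, u, v]) :
    a * star a = ((qNormSq a : ℚ) : ℍ[ℚ, u, v]) := by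
  ext <;> simp [qNormSq, QuaternionAlgebra.re_mul, QuaternionAlgebra.imI_mul,
    QuaternionAlgebra.imJ_mul, QuaternionAlgebra.imK_mul] <;> ring

lemma inv_eq_smul_star {u v : ℚ} (z : (ℍ[ℚ, u, v])ˣ)
    (hm : qNormSq (z : ℍ[ℚ, u, v]) ≠ 0) :
    ((z⁻¹ : (ℍ[ℚ, u, v])ˣ) : ℍ[ℚ, u, v]) =
      (qNormSq (z : ℍ[ℚ, u, v]))⁻¹ • star (z : ℍ[ℚ, u, v]) := by
  set w : ℍ[ℚ, u, v] := (z : ℍ[ℚ, u, v])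
  have h1 : w * ((qNormSq w)⁻¹ • star w) = 1 := by
    rw [mul_smul_comm, mul_star_eq_coe]
    set_option linter.unnecessarySeqFocus false in ext <;> simp <;> field_simp
  calc ((z⁻¹ : (ℍ[ℚ, u, v])ˣ) : ℍ[ℚ, u, v])
      = ((z⁻¹ : (ℍ[ℚ, u, v])ˣ) : ℍ[ℚ, u, v]) * (w * ((qNormSq w)⁻¹ • star w)) := by
        rw [h1, mul_one]
    _ = (qNormSq w)⁻¹ • star w := by
        rw [← mul_assoc]
        simp [w]

lemma qNormSq_sub {u v : ℚ} (x y : ℍ[ℚ, u, v]) :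
    qNormSq (x - y) = qNormSq x + qNormSq y - 2 * (x * star y).re := by
  simp [qNormSq, QuaternionAlgebra.re_mul]; ring

lemma qNormSq_smul_sub_smul {u v : ℚ} (s t : ℚ) (x y : ℍ[ℚ, u, v]) :
    qNormSq (s • x - t • y) =
      s^2 * qNormSq x + t^2 * qNormSq y - 2 * s * t * (x * star y).re := by
  simp [qNormSq, QuaternionAlgebra.re_mul]; ring

lemma qNormSq_star {u v : ℚ} (x : ℍ[ℚ, u, v]) : qNormSq (star x) = qNormSq x := by
  simp [qNormSq, QuaternionAlgebra.re_mul]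

lemma re_star_mul_star {u v : ℚ} (x y : ℍ[ℚ, u, v]) :
    (star x * star (star y)).re = (x * star y).re := by
  simp [QuaternionAlgebra.re_mul]

/-- Let `u, v` be negative integers, `H = ℍ[ℚ, u, v]`, `a ∈ H` with
`normSq a = n` and `1 < n`, and let `z` be a unit of `H`. Then `normSq (z - a) < 1` iff
`normSq (z⁻¹ - (n-1)⁻¹ • ā) < ((n-1)⁻¹)²`. -/
theorem norm_lemma_quaternion (u v : ℤ) (hu : u < 0) (hv : v < 0)
    (a : ℍ[ℚ, (u : ℚ), (v : ℚ)]) (n : ℚ) (ha : qNormSq a = n) (hn : 1 < n)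
    (z : (ℍ[ℚ, (u : ℚ), (v : ℚ)])ˣ) :
    qNormSq ((z : ℍ[ℚ, (u : ℚ), (v : ℚ)]) - a) < 1 ↔
      qNormSq (((z⁻¹ : (ℍ[ℚ, (u : ℚ), (v : ℚ)])ˣ) : ℍ[ℚ, (u : ℚ), (v : ℚ)])
          - (n - 1)⁻¹ • star a) < ((n - 1)⁻¹) ^ 2 := by
  have hu' : (u : ℚ) < 0 := by exact_mod_cast hu
  have hv' : (v : ℚ) < 0 := by exact_mod_cast hv
  set w : ℍ[ℚ, (u : ℚ), (v : ℚ)] := (z : ℍ[ℚ, (u : ℚ), (v : ℚ)]) with hw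
  have hw0 : w ≠ 0 := by
    intro h
    have h2 := z.mul_inv
    rw [← hw, h, zero_mul] at h2
    exact one_ne_zero h2.symm
  have hm : 0 < qNormSq w := qNormSq_pos hu' hv' hw0
  rw [inv_eq_smul_star z hm.ne', qNormSq_sub, qNormSq_smul_sub_smul,
    qNormSq_star, qNormSq_star, re_star_mul_star, ha]
  set m : ℚ := qNormSq w
  set T : ℚ := (w * star a).re
  have hc : 0 < n - 1 := by linarith
  have key : (m⁻¹)^2 * m + ((n-1)⁻¹)^2 * n - 2 * m⁻¹ * (n-1)⁻¹ * T - ((n-1)⁻¹)^2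
      = (m + n - 2*T - 1) * ((n-1) * m⁻¹ * ((n-1)⁻¹)^2) := by
    field_simp
    ring
  have hpos : 0 < (n-1) * m⁻¹ * ((n-1)⁻¹)^2 := by positivity
  constructor
  · intro h
    nlinarith [mul_neg_of_neg_of_pos (show m + n - 2*T - 1 < 0 by linarith) hpos]
  · intro h
    by_contra h'
    push_neg at h'
    nlinarith [mul_nonneg (show 0 ≤ m + n - 2*T - 1 by linarith) hpos.le]
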